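/- For every finite graph G and every r ∈ ℕ, wcol_r(G) ≤ (col_r(G))^r. -/

import Mathlib

open SimpleGraph

variable {V : Type} [Fintype V]

def WReach (G : SimpleGraph V) (L : LinearOrder V) (r : ℕ) (v : V) : Set V :=
  {u | ∃ p : G.Walk v u, p.IsPath ∧ p.length ≤ r ∧ ∀ w ∈ p.support, L.le u w}

def SReach (G : SimpleGraph V) (L : LinearOrder V) (r : ℕ) (v : V) : Set V :=
  {u | ∃ p : G.Walk v u, p.IsPath ∧ p.length ≤ r ∧ L.le u v ∧
    ∀ w ∈ p.support, w ≠ u → w ≠ v → L.lt v w}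

noncomputable def wcol (G : SimpleGraph V) (r : ℕ) : ℕ :=
  sInf {k | ∃ L : LinearOrder V, ∀ v, (WReach G L r v).ncard ≤ k}

noncomputable def col (G : SimpleGraph V) (r : ℕ) : ℕ :=
  sInf {k | ∃ L : LinearOrder V, ∀ v, (SReach G L r v).ncard ≤ k}

lemma self_mem_SReach (G : SimpleGraph V) (L : LinearOrder V) (r : ℕ) (v : V) :
    v ∈ SReach G L r v := by
  refine ⟨Walk.nil, Walk.IsPath.nil, by simp, L.le_refl v, ?_⟩
  intro w hw h1 h2
  simp only [Walk.support_nil, List.mem_singleton] at hw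
  exact absurd hw h2

/-- Iterated strong-reachability chains. -/
def chainA (G : SimpleGraph V) (L : LinearOrder V) (r : ℕ) : ℕ → V → Set V
  | 0, v => {v}
  | (t+1), v => ⋃ w ∈ chainA G L r t v, SReach G L r w

lemma chainA_mono (G : SimpleGraph V) (L : LinearOrder V) (r : ℕ) (v : V) :
    ∀ t, chainA G L r t v ⊆ chainA G L r (t+1) v := by
  intro t
  induction t with
  | zero =>
    intro x hx
    simp only [chainA, Set.mem_singleton_iff] at hx
    subst hx
    simp only [chainA]
    exact Set.mem_biUnion rfl (self_mem_SReach G L r x)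
  | succ t ih =>
    intro x hx
    rw [show chainA G L r (t+1) v = ⋃ w ∈ chainA G L r t v, SReach G L r w from rfl] at hx
    obtain ⟨w, hw, hxw⟩ := Set.mem_iUnion₂.mp hx
    exact Set.mem_biUnion (ih hw) hxw

lemma chainA_le_mono (G : SimpleGraph V) (L : LinearOrder V) (r : ℕ) (v : V)
    {s t : ℕ} (h : s ≤ t) : chainA G L r s v ⊆ chainA G L r t v := by
  induction t with
  | zero => simp_all
  | succ t ih =>
    rcases Nat.lt_or_ge s (t+1) with h' | h'
    · exact (ih (Nat.lt_succ_iff.mp h')).trans (chainA_mono G L r v t)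
    · have : s = t + 1 := le_antisymm h h'
      subst this; exact subset_rfl

lemma ncard_biUnion_le {S : Set V} {f : V → Set V} {k : ℕ} (h : ∀ w, (f w).ncard ≤ k) :
    (⋃ w ∈ S, f w).ncard ≤ S.ncard * k := by
  classical
  have heq : (⋃ w ∈ S, f w) = ↑(S.toFinset.biUnion (fun w => (f w).toFinset)) := by
    ext x; simp
  rw [heq, Set.ncard_coe_finset, Set.ncard_eq_toFinset_card']
  refine Finset.card_biUnion_le_card_mul _ _ _ ?_
  intro a _
  rw [← Set.ncard_eq_toFinset_card']
  exact h a

lemma chainA_ncard_le (G : SimpleGraph V) (L : LinearOrder V) (r : ℕ) {k : ℕ}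
    (hk : ∀ w, (SReach G L r w).ncard ≤ k) (v : V) :
    ∀ t, (chainA G L r t v).ncard ≤ k ^ t := by
  intro t
  induction t with
  | zero => simp [chainA]
  | succ t ih =>
    calc (chainA G L r (t+1) v).ncard ≤ (chainA G L r t v).ncard * k :=
          ncard_biUnion_le hk
      _ ≤ k ^ t * k := Nat.mul_le_mul_right k ih
      _ = k ^ (t+1) := (pow_succ k t).symm

lemma key (G : SimpleGraph V) (L : LinearOrder V) (r : ℕ) :
    ∀ s, s ≤ r → ∀ (v u : V) (p : G.Walk v u), p.IsPath → p.length ≤ s →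
      (∀ w ∈ p.support, L.le u w) → u ∈ chainA G L r s v := by
  classical
  intro s
  induction s with
  | zero =>
    intro _ v u p _ hlen _
    have : v = u := Walk.eq_of_length_eq_zero (Nat.le_zero.mp hlen)
    subst this
    simp [chainA]
  | succ t ih =>
    intro hsr v u p hp hlen hmin
    rcases Nat.eq_zero_or_pos p.length with h0 | hpos
    · have : v = u := Walk.eq_of_length_eq_zero h0
      subst this
      exact chainA_le_mono G L r v (Nat.zero_le _) (by simp [chainA])
    · letI := L
      have hvu : v ≠ u := by
        intro h; subst h
        have : p.length = 0 := (congrArg Walk.length ((Walk.isPath_iff_eq_nil (p := p)).mp hp)).trans Walk.length_nil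
        omega
      set F : Finset V := p.support.toFinset.erase u with hF
      have hvF : v ∈ F := by
        simp [hF, hvu, p.start_mem_support]
      have hFne : F.Nonempty := ⟨v, hvF⟩
      set x : V := F.min' hFne with hxdef
      have hxF : x ∈ F := F.min'_mem hFne
      have hxu : x ≠ u := (Finset.mem_erase.mp hxF).1
      have hx : x ∈ p.support := by
        have := (Finset.mem_erase.mp hxF).2
        simpa using this
      have hxmin : ∀ w ∈ p.support, w ≠ u → L.le x w := by
        intro w hw hwu
        exact F.min'_le w (by simp [hF, hwu, hw])
      set q1 := p.takeUntil x hx with hq1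
      set q2 := p.dropUntil x hx with hq2
      have hspec : q1.append q2 = p := p.take_spec hx
      have hlensum : q1.length + q2.length = p.length := by
        rw [← hspec, Walk.length_append]
      have hq2pos : 1 ≤ q2.length := by
        rcases Nat.eq_zero_or_pos q2.length with h0 | h; · exact absurd (Walk.eq_of_length_eq_zero h0) hxu
        · exact h
      have hq1len : q1.length ≤ t := by omega
      -- u not in q1.support
      have hsupp : q1.support ++ q2.support.tail = p.support := by
        rw [← hspec, Walk.support_append]
      have hnodup : (q1.support ++ q2.support.tail).Nodup := by
        rw [hsupp]; exact hp.support_nodup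
      have huq2t : u ∈ q2.support.tail := by
        have h1 : u ∈ q2.support := q2.end_mem_support
        rw [q2.support_eq_cons] at h1
        rcases List.mem_cons.mp h1 with h | h
        · exact absurd h.symm hxu
        · exact h
      have hunq1 : u ∉ q1.support := by
        intro h
        exact (List.disjoint_of_nodup_append hnodup) h huq2t
      -- x is weakly reachable from v via q1
      have hxchain : x ∈ chainA G L r t v := by
        refine ih (le_trans (Nat.le_succ t) hsr) v x q1 (hp.takeUntil hx) hq1len ?_
        intro w hw
        have hwp : w ∈ p.support := p.support_takeUntil_subset hx hw
        have hwu : w ≠ u := by rintro rfl; exact hunq1 hw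
        exact hxmin w hwp hwu
      -- u is strongly reachable from x via q2
      have huS : u ∈ SReach G L r x := by
        refine ⟨q2, hp.dropUntil hx, ?_, hmin x hx, ?_⟩
        · calc q2.length ≤ p.length := p.length_dropUntil_le hx
            _ ≤ r := le_trans hlen hsr
        · intro w hw hwu hwx
          have hwp : w ∈ p.support := p.support_dropUntil_subset hx hw
          exact lt_of_le_of_ne (hxmin w hwp hwu) (Ne.symm hwx)
      simp only [chainA, Set.mem_iUnion]
      exact ⟨x, hxchain, huS⟩

theorem wcol_le_col_pow (G : SimpleGraph V) (r : ℕ) : wcol G r ≤ (col G r) ^ r := by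
  classical
  have hne : {k | ∃ L : LinearOrder V, ∀ v, (SReach G L r v).ncard ≤ k}.Nonempty := by
    refine ⟨Fintype.card V, ?_⟩
    obtain ⟨e⟩ := Fintype.truncEquivFin V
    refine ⟨LinearOrder.lift' e e.injective, fun v => ?_⟩
    calc (SReach _ _ r v).ncard ≤ (Set.univ : Set V).ncard :=
          Set.ncard_le_ncard (Set.subset_univ _) Set.finite_univ
      _ = Fintype.card V := by rw [Set.ncard_univ, Nat.card_eq_fintype_card]
  obtain ⟨L, hL⟩ := Nat.sInf_mem hne
  apply Nat.sInf_le
  refine ⟨L, fun v => ?_⟩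
  have hsub : WReach G L r v ⊆ chainA G L r r v := by
    rintro u ⟨p, hp, hlen, hmin⟩
    exact key G L r r le_rfl v u p hp hlen hmin
  calc (WReach G L r v).ncard ≤ (chainA G L r r v).ncard :=
        Set.ncard_le_ncard hsub (Set.toFinite _)
    _ ≤ (col G r) ^ r := chainA_ncard_le G L r hL v r
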